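/- Let F be a number field and n ≥ 1. Every nilpotent matrix X ∈ Mat_n(F) is SL_n(F)-conjugate to a matrix of the form D(d)·J_p: there exist a partition p of n, an element d ∈ F^×, and g ∈ SL_n(F) such that g X g^{-1} = D(d) J_p. Conversely, for every partition p of n and every d ∈ F^×, the matrix D(d)J_p is nilpotent, so each such matrix is a representative of an SL_n(F)-conjugacy class of nilpotent matrices. -/

import Mathlib

/-- The lower-triangular "Jordan" matrix `J_p` attached to an ordered partition
`p = [p₁, p₂, …]` of `n`: block diagonal with lower Jordan blocks `J_{[pᵢ]}`.
Concretely, the entry at `(j+1, j)` is `1` unless `j+1` is a partial sum of `p`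
(i.e. a block boundary), and all other entries vanish. -/
def Jmat (F : Type*) [Field F] (n : ℕ) (p : List ℕ) : Matrix (Fin n) (Fin n) F :=
  fun i j => if (i : ℕ) = (j : ℕ) + 1 ∧ (j : ℕ) + 1 ∉ p.scanl (· + ·) 0 then 1 else 0

/-- The diagonal matrix `D(d) = diag(1, …, 1, d)`. -/
def Dmat (F : Type*) [Field F] (n : ℕ) (d : F) : Matrix (Fin n) (Fin n) F :=
  Matrix.diagonal (fun i => if (i : ℕ) = n - 1 then d else 1)

open Module

universe v

lemma strictLower_nilpotent {F : Type*} [Field F] {n : ℕ} (M : Matrix (Fin n) (Fin n) F)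
    (h : ∀ i j : Fin n, (i : ℕ) ≤ j → M i j = 0) : IsNilpotent M := by
  refine ⟨n, ?_⟩
  have key : ∀ (k : ℕ) (i j : Fin n), (i : ℕ) < (j : ℕ) + k → (M ^ k) i j = 0 := by
    intro k
    induction k with
    | zero =>
        intro i j hij
        have : i ≠ j := by intro h'; omega
        simp [Matrix.one_apply, this]
    | succ k ih =>
        intro i j hij
        rw [pow_succ, Matrix.mul_apply]
        apply Finset.sum_eq_zero
        intro t _
        by_cases ht : (t : ℕ) ≤ (j : ℕ)
        · rw [h t j ht, mul_zero]
        · rw [ih i t (by omega), zero_mul]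
  ext i j
  simp [key n i j (by omega)]

lemma jordan_chains {F : Type*} [Field F] (n : ℕ) :
    ∀ (V : Type v) [AddCommGroup V] [Module F V] [FiniteDimensional F V]
      (f : Module.End F V), finrank F V = n → IsNilpotent f →
      ∃ (r : ℕ) (k : Fin r → ℕ) (v : Fin r → V),
        (∀ i, 0 < k i) ∧ Antitone k ∧ (∀ i, (f ^ (k i)) (v i) = 0) ∧
        (∑ i, k i) = n ∧
        ⊤ ≤ Submodule.span F
          (Set.range (fun x : Σ i : Fin r, Fin (k i) => (f ^ (x.2 : ℕ)) (v x.1))) := by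
  induction n using Nat.strong_induction_on with
  | _ n IH =>
  intro V _ _ _ f h hf
  rcases Nat.eq_zero_or_pos n with rfl | hn
  · have hsub : Subsingleton V := finrank_zero_iff.mp h
    refine ⟨0, Fin.elim0, Fin.elim0, fun i => i.elim0, fun i => i.elim0,
      fun i => i.elim0, by simp, ?_⟩
    intro x _
    have : x = 0 := Subsingleton.elim x 0
    simp [this]
  obtain ⟨N, hN⟩ := hf
  set W := LinearMap.range f with hWdef
  set K := LinearMap.ker f with hKdef
  -- the kernel is nontrivial
  have hker : K ≠ ⊥ := by
    intro hbot
    have hinj : Function.Injective f := LinearMap.ker_eq_bot.mp hbot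
    have hsurj : Function.Surjective f := (LinearMap.injective_iff_surjective).mp hinj
    have hNsurj : ∀ m : ℕ, Function.Surjective ⇑(f ^ m) := by
      intro m
      induction m with
      | zero => intro y; exact ⟨y, by simp⟩
      | succ m ihm =>
          rw [pow_succ]
          intro y
          obtain ⟨z, hz⟩ := ihm y
          obtain ⟨x, hx⟩ := hsurj z
          exact ⟨x, by rw [Module.End.mul_apply, hx, hz]⟩
    have hnt : Nontrivial V := finrank_pos_iff.mp (h ▸ hn)
    obtain ⟨y, hy⟩ := exists_ne (0 : V)
    obtain ⟨x, hx⟩ := hNsurj N y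
    rw [hN] at hx
    simp only [LinearMap.zero_apply] at hx
    exact hy hx.symm
  have hKpos : 0 < finrank F ↥K :=
    finrank_pos_iff.mpr (Submodule.nontrivial_iff_ne_bot.mpr hker)
  have hrn : finrank F ↥W + finrank F ↥K = n := by
    rw [← h]; exact LinearMap.finrank_range_add_finrank_ker f
  have hWlt : finrank F ↥W < n := by omega
  -- restrict f to W
  have hmap : ∀ x ∈ W, f x ∈ W := fun x _ => LinearMap.mem_range_self f x
  set f' : Module.End F ↥W := f.restrict hmap with hf'def
  have hf' : IsNilpotent f' := by
    refine ⟨N, ?_⟩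
    have hpr := Module.End.pow_restrict (f' := f) N hmap
    ext x
    simp only [hf'def, hpr, LinearMap.restrict_apply, hN, LinearMap.zero_apply,
      ZeroMemClass.coe_zero]
  obtain ⟨r, k, u, hkpos, hkanti, hkill, hsum, hspan⟩ :=
    IH (finrank F ↥W) hWlt ↥W f' rfl hf'
  -- choose preimages of chain generators
  choose v hv using fun i => LinearMap.mem_range.mp (u i).2
  have hcoe : ∀ (i : Fin r) (j : ℕ), (((f' ^ j) (u i) : ↥W) : V) = (f ^ (j + 1)) (v i) := by
    intro i j
    rw [hf'def, Module.End.pow_restrict (f' := f) j hmap, LinearMap.restrict_apply]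
    show (f ^ j) ↑(u i) = _
    rw [← hv i, pow_succ, Module.End.mul_apply]
  have hkill1 : ∀ i, (f ^ (k i + 1)) (v i) = 0 := by
    intro i
    rw [← hcoe i (k i), hkill i, ZeroMemClass.coe_zero]
  -- basis of W from the chains
  set cW : (Σ i : Fin r, Fin (k i)) → ↥W := fun x => (f' ^ (x.2 : ℕ)) (u x.1) with hcWdef
  have hcardW : Fintype.card (Σ i : Fin r, Fin (k i)) = finrank F ↥W := by
    simp [Fintype.card_sigma, hsum]
  set bW : Basis (Σ i : Fin r, Fin (k i)) F ↥W :=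
    basisOfTopLeSpanOfCardEqFinrank cW hspan hcardW with hbWdef
  have hbW : ⇑bW = cW := coe_basisOfTopLeSpanOfCardEqFinrank cW hspan hcardW
  -- the chain tails in the kernel
  set e : Fin r → V := fun i => (f ^ (k i)) (v i) with hedef
  have he_ker : ∀ i, e i ∈ K := by
    intro i
    rw [hKdef, LinearMap.mem_ker]
    show f ((f ^ (k i)) (v i)) = 0
    rw [← Module.End.mul_apply, ← pow_succ', hkill1]
  have he_li : LinearIndependent F e := by
    set g : Fin r → Σ i : Fin r, Fin (k i) := fun i => ⟨i, ⟨k i - 1, by have := hkpos i; omega⟩⟩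
      with hgdef
    have ginj : Function.Injective g := by
      intro a b hab
      simpa [hgdef] using congrArg Sigma.fst hab
    have h1 : LinearIndependent F (W.subtype ∘ (bW ∘ g)) :=
      ((bW.linearIndependent).comp g ginj).map' W.subtype (Submodule.ker_subtype W)
    have h2 : W.subtype ∘ (bW ∘ g) = e := by
      funext i
      show ((bW (g i) : ↥W) : V) = e i
      rw [hbW]
      show ((cW ⟨i, ⟨k i - 1, _⟩⟩ : ↥W) : V) = e i
      rw [hcWdef]
      show (((f' ^ (k i - 1)) (u i) : ↥W) : V) = e i
      have hki : k i - 1 + 1 = k i := by have := hkpos i; omega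
      rw [hcoe i (k i - 1), hki, hedef]
    rwa [h2] at h1
  set eK : Fin r → ↥K := fun i => ⟨e i, he_ker i⟩ with heKdef
  have heK_li : LinearIndependent F eK := by
    apply LinearIndependent.of_comp K.subtype
    convert he_li using 1
    funext i; rfl
  set E' : Submodule F ↥K := Submodule.span F (Set.range eK) with hE'def
  obtain ⟨C', hC'⟩ := Submodule.exists_isCompl E'
  set s := finrank F ↥C' with hsdef
  have hKrs : finrank F ↥K = r + s := by
    rw [← Submodule.finrank_add_eq_of_isCompl hC', hE'def]
    congr 1
    rw [finrank_span_eq_card heK_li, Fintype.card_fin]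
  set bC : Basis (Fin s) F ↥C' := Module.finBasis F ↥C' with hbCdef
  set w : Fin s → V := fun l => ((bC l : ↥K) : V) with hwdef
  have hfw : ∀ l, f (w l) = 0 := fun l => LinearMap.mem_ker.mp (bC l : ↥K).2
  -- assemble the new chain data
  set k'' : Fin (r + s) → ℕ := fun j => if h : (j : ℕ) < r then k ⟨j, h⟩ + 1 else 1
    with hk''def
  set v'' : Fin (r + s) → V := fun j =>
    if h : (j : ℕ) < r then v ⟨j, h⟩ else w ⟨(j : ℕ) - r, by have := j.isLt; omega⟩
    with hv''def
  refine ⟨r + s, k'', v'', ?_, ?_, ?_, ?_, ?_⟩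
  · intro j
    by_cases hj : (j : ℕ) < r <;> simp [hk''def, hj]
  · intro a b hab
    by_cases hb : (b : ℕ) < r
    · have ha : (a : ℕ) < r := lt_of_le_of_lt hab hb
      simp only [hk''def, dif_pos ha, dif_pos hb]
      have : (⟨(a : ℕ), ha⟩ : Fin r) ≤ ⟨(b : ℕ), hb⟩ := hab
      exact Nat.add_le_add_right (hkanti this) 1
    · by_cases ha : (a : ℕ) < r <;> simp [hk''def, ha, hb]
  · intro j
    by_cases hj : (j : ℕ) < r
    · simp only [hk''def, hv''def, dif_pos hj]
      exact hkill1 ⟨j, hj⟩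
    · simp only [hk''def, hv''def, dif_neg hj, pow_one]
      exact hfw _
  · rw [Fin.sum_univ_add]
    have h1 : ∀ i : Fin r, k'' (Fin.castAdd s i) = k i + 1 := by
      intro i
      simp only [hk''def, Fin.coe_castAdd, dif_pos i.isLt, Fin.eta]
    have h2 : ∀ l : Fin s, k'' (Fin.natAdd r l) = 1 := by
      intro l
      simp only [hk''def, Fin.coe_natAdd]
      rw [dif_neg (by omega)]
    simp only [h1, h2]
    rw [Finset.sum_add_distrib]
    simp only [Finset.sum_const, Finset.card_univ, Fintype.card_fin, smul_eq_mul, mul_one]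
    omega
  · -- spanning
    set S := Submodule.span F
      (Set.range (fun x : Σ j : Fin (r + s), Fin (k'' j) => (f ^ (x.2 : ℕ)) (v'' x.1))) with hSdef
    have hchain_mem : ∀ (i : Fin r) (j : ℕ), j ≤ k i → (f ^ j) (v i) ∈ S := by
      intro i j hj
      have hlt : (i : ℕ) < r + s := by have := i.isLt; omega
      have hkval : k'' ⟨(i : ℕ), hlt⟩ = k i + 1 := by
        simp only [hk''def, dif_pos i.isLt, Fin.eta]
      have hjlt : j < k'' ⟨(i : ℕ), hlt⟩ := by omega
      apply Submodule.subset_span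
      refine ⟨⟨⟨(i : ℕ), hlt⟩, ⟨j, hjlt⟩⟩, ?_⟩
      show (f ^ j) (v'' ⟨(i : ℕ), hlt⟩) = (f ^ j) (v i)
      simp only [hv''def, dif_pos i.isLt, Fin.eta]
    have htail_mem : ∀ l : Fin s, w l ∈ S := by
      intro l
      have hlt : r + (l : ℕ) < r + s := by have := l.isLt; omega
      have hnlt : ¬ ((⟨r + (l : ℕ), hlt⟩ : Fin (r + s)) : ℕ) < r := by simp
      have hkval : 0 < k'' ⟨r + (l : ℕ), hlt⟩ := by
        simp only [hk''def, dif_neg hnlt]; omega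
      apply Submodule.subset_span
      refine ⟨⟨⟨r + (l : ℕ), hlt⟩, ⟨0, hkval⟩⟩, ?_⟩
      show (f ^ 0) (v'' ⟨r + (l : ℕ), hlt⟩) = w l
      simp only [pow_zero, Module.End.one_apply, hv''def, dif_neg hnlt]
      congr 1
      ext
      simp
    have hW_le : ∀ y : ↥W, ∃ z ∈ S, f z = (y : V) := by
      intro y
      refine ⟨∑ x : Σ i : Fin r, Fin (k i), (bW.repr y) x • (f ^ (x.2 : ℕ)) (v x.1), ?_, ?_⟩
      · exact Submodule.sum_mem _ fun x _ =>
          Submodule.smul_mem _ _ (hchain_mem x.1 x.2 (le_of_lt x.2.isLt))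
      · rw [map_sum]
        have hterm : ∀ x : Σ i : Fin r, Fin (k i),
            f ((bW.repr y) x • (f ^ (x.2 : ℕ)) (v x.1)) = (bW.repr y) x • ((cW x : ↥W) : V) := by
          intro x
          rw [map_smul]
          congr 1
          rw [← Module.End.mul_apply, ← pow_succ', hcWdef]
          exact (hcoe x.1 x.2).symm
        simp only [hterm]
        have := congrArg (W.subtype) (bW.sum_repr y)
        simpa [map_sum, hbW] using this
    have he_memS : ∀ i, e i ∈ S := fun i => hchain_mem i (k i) le_rfl
    have hK_le : ∀ z ∈ K, z ∈ S := by
      intro z hz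
      have hzK : (⟨z, hz⟩ : ↥K) ∈ E' ⊔ C' := by rw [hC'.sup_eq_top]; trivial
      obtain ⟨a, ha, b, hb, hab⟩ := Submodule.mem_sup.mp hzK
      have hzab : z = (a : V) + (b : V) := by
        have := congrArg (K.subtype) hab
        simpa using this.symm
      have haS : (a : V) ∈ S := by
        have h1 : (a : V) ∈ E'.map K.subtype := Submodule.mem_map_of_mem ha
        rw [hE'def, Submodule.map_span] at h1
        have h2 : ⇑K.subtype '' Set.range eK = Set.range e := by
          rw [← Set.range_comp]
          congr 1
        rw [h2] at h1
        refine Submodule.span_le.mpr ?_ h1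
        rintro _ ⟨i, rfl⟩
        exact he_memS i
      have hbS : (b : V) ∈ S := by
        set ι : ↥C' →ₗ[F] V := K.subtype.comp C'.subtype with hιdef
        have h1 : (b : V) = ι ⟨b, hb⟩ := rfl
        rw [h1, ← bC.sum_repr ⟨b, hb⟩, map_sum]
        apply Submodule.sum_mem
        intro l _
        rw [map_smul]
        exact Submodule.smul_mem _ _ (htail_mem l)
      rw [hzab]
      exact S.add_mem haS hbS
    intro x _
    obtain ⟨y, hyS, hyf⟩ := hW_le ⟨f x, LinearMap.mem_range_self f x⟩
    have hxy : x - y ∈ K := by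
      rw [hKdef, LinearMap.mem_ker, map_sub, hyf, sub_self]
    have : x = y + (x - y) := by abel
    rw [this]
    exact S.add_mem hyS (hK_le _ hxy)

lemma mem_scanl_add (l : List ℕ) (a t : ℕ) :
    t ∈ l.scanl (· + ·) a ↔ ∃ m ≤ l.length, t = a + (l.take m).sum := by
  induction l generalizing a with
  | nil => simp [List.scanl]
  | cons x l ih =>
      simp only [List.scanl_cons, List.mem_cons, ih]
      constructor
      · rintro (rfl | ⟨m, hm, rfl⟩)
        · exact ⟨0, by simp, by simp⟩
        · exact ⟨m + 1, by simpa using hm, by simp [add_assoc]⟩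
      · rintro ⟨m, hm, rfl⟩
        cases m with
        | zero => left; simp
        | succ m => right; exact ⟨m, by simpa using hm, by simp [add_assoc]⟩

lemma exists_basis_jordan {F : Type*} [Field F] (n : ℕ) (V : Type v) [AddCommGroup V]
    [Module F V] [FiniteDimensional F V] (f : Module.End F V) (h : finrank F V = n)
    (hf : IsNilpotent f) :
    ∃ p : List ℕ, List.Pairwise (· ≥ ·) p ∧ (∀ x ∈ p, 0 < x) ∧ p.sum = n ∧
      ∃ b : Basis (Fin n) F V, LinearMap.toMatrix b b f = Jmat F n p := by
  obtain ⟨r, k, v, hkpos, hkanti, hkill, hsum, hspan⟩ := jordan_chains n V f h hf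
  set p : List ℕ := List.ofFn k with hpdef
  have hlen : p.length = r := List.length_ofFn (f := k)
  have hsorted : List.Pairwise (· ≥ ·) p := by
    rw [List.pairwise_iff_get]
    intro i j hij
    rw [List.get_ofFn, List.get_ofFn]
    exact hkanti (by simpa using le_of_lt hij)
  have hpos : ∀ x ∈ p, 0 < x := by
    intro x hx
    obtain ⟨i, hi⟩ := Set.mem_range.mp ((List.mem_ofFn' k x).mp hx)
    exact hi ▸ hkpos i
  have hpsum : p.sum = n := by rw [hpdef, List.sum_ofFn, hsum]
  -- partial sums
  set T : ℕ → ℕ := fun a => (p.take a).sum with hTdef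
  have hTsucc : ∀ (a : ℕ) (ha : a < r), T (a + 1) = T a + k ⟨a, ha⟩ := by
    intro a ha
    rw [hTdef]
    simp only
    rw [List.sum_take_succ p a (by omega)]
    congr 1
    simp [hpdef]
  have hTadd : ∀ a c : ℕ, T a ≤ T (a + c) := by
    intro a c
    simp only [hTdef, List.take_add, List.sum_append]
    exact Nat.le_add_right _ _
  have hTmono : Monotone T := by
    intro a b hab
    have : b = a + (b - a) := by omega
    rw [this]
    exact hTadd a (b - a)
  have hTr : ∀ a, r ≤ a → T a = n := by
    intro a ha
    have : p.take a = p := List.take_of_length_le (by omega)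
    rw [hTdef]; simp only [this, hpsum]
  have hTlt : ∀ (i : Fin r) (j : ℕ), j < k i → T i + j < n := by
    intro i j hj
    have h1 : T i + j < T ((i : ℕ) + 1) := by
      rw [hTsucc i i.isLt]
      simp only [Fin.eta]
      omega
    have h2 : T ((i : ℕ) + 1) ≤ T r := hTmono (by omega)
    rw [hTr r le_rfl] at h2
    omega
  -- the flattening bijection
  set φ : (Σ i : Fin r, Fin (k i)) → Fin n :=
    fun x => ⟨T x.1 + x.2, hTlt x.1 x.2 x.2.isLt⟩ with hφdef
  have hφlt : ∀ x y : Σ i : Fin r, Fin (k i),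
      (x.1 : ℕ) < (y.1 : ℕ) → T x.1 + (x.2 : ℕ) < T y.1 + (y.2 : ℕ) := by
    intro x y hxy
    have h1 : T x.1 + (x.2 : ℕ) < T ((x.1 : ℕ) + 1) := by
      rw [hTsucc x.1 x.1.isLt]
      simp only [Fin.eta]
      have := x.2.isLt
      omega
    have h2 : T ((x.1 : ℕ) + 1) ≤ T y.1 := hTmono (by omega)
    omega
  have hφinj : Function.Injective φ := by
    rintro ⟨x1, x2⟩ ⟨y1, y2⟩ hxy
    have hval : T x1 + (x2 : ℕ) = T y1 + (y2 : ℕ) := by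
      have := congrArg Fin.val hxy
      simpa [hφdef] using this
    rcases lt_trichotomy (x1 : ℕ) (y1 : ℕ) with hlt | heq | hgt
    · exact absurd hval (Nat.ne_of_lt (hφlt ⟨x1, x2⟩ ⟨y1, y2⟩ hlt))
    · have h1 : x1 = y1 := Fin.ext heq
      subst h1
      have h2 : x2 = y2 := Fin.ext (by omega)
      rw [h2]
    · exact absurd hval.symm (Nat.ne_of_lt (hφlt ⟨y1, y2⟩ ⟨x1, x2⟩ hgt))
  have hcard : Fintype.card (Σ i : Fin r, Fin (k i)) = Fintype.card (Fin n) := by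
    simp [Fintype.card_sigma, hsum]
  set E : (Σ i : Fin r, Fin (k i)) ≃ Fin n :=
    Equiv.ofBijective φ ((Fintype.bijective_iff_injective_and_card φ).mpr ⟨hφinj, hcard⟩)
    with hEdef
  have hEapp : ∀ x, (E x : ℕ) = T x.1 + (x.2 : ℕ) := fun x => rfl
  -- the basis
  set c : (Σ i : Fin r, Fin (k i)) → V := fun x => (f ^ (x.2 : ℕ)) (v x.1) with hcdef
  have hcard2 : Fintype.card (Σ i : Fin r, Fin (k i)) = finrank F V := by
    simp [Fintype.card_sigma, hsum, h]
  set b0 : Basis (Σ i : Fin r, Fin (k i)) F V :=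
    basisOfTopLeSpanOfCardEqFinrank c hspan hcard2 with hb0def
  have hb0 : ⇑b0 = c := coe_basisOfTopLeSpanOfCardEqFinrank c hspan hcard2
  set b : Basis (Fin n) F V := b0.reindex E with hbdef
  -- scanl membership
  have hscanl : ∀ t : ℕ, t ∈ p.scanl (· + ·) 0 ↔ ∃ m ≤ r, t = T m := by
    intro t
    rw [mem_scanl_add, hlen]
    simp only [zero_add, hTdef]
  have hmem : ∀ (i : Fin r) (j : ℕ), j < k i →
      ((T i + j + 1 ∈ p.scanl (· + ·) 0) ↔ j + 1 = k i) := by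
    intro i j hj
    rw [hscanl]
    constructor
    · rintro ⟨m, hm, heq⟩
      have h1 : T (i : ℕ) < T m := by omega
      have h2 : (i : ℕ) < m := by
        by_contra hc
        exact absurd (hTmono (not_lt.mp hc)) (not_le.mpr h1)
      have h3 : T ((i : ℕ) + 1) ≤ T m := hTmono (by omega)
      have h4 : T ((i : ℕ) + 1) = T i + k i := by
        rw [hTsucc i i.isLt]
      omega
    · intro hjk
      refine ⟨(i : ℕ) + 1, by omega, ?_⟩
      rw [hTsucc i i.isLt]
      simp only [Fin.eta]
      omega
  refine ⟨p, hsorted, hpos, hpsum, b, ?_⟩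
  ext i' j'
  rw [LinearMap.toMatrix_apply]
  rcases hx : E.symm j' with ⟨i, j⟩
  have hj'E : E ⟨i, j⟩ = j' := by rw [← hx]; exact E.apply_symm_apply j'
  have hj'val : (j' : ℕ) = T i + (j : ℕ) := by rw [← hj'E]; exact (hEapp ⟨i, j⟩).symm
  have hbj' : b j' = b0 ⟨i, j⟩ := by rw [hbdef, Basis.reindex_apply, hx]
  have hfb : f (b j') = (f ^ ((j : ℕ) + 1)) (v i) := by
    rw [hbj', hb0, hcdef]
    show f ((f ^ (j : ℕ)) (v i)) = _
    rw [← Module.End.mul_apply, ← pow_succ']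
  rw [hfb]
  simp only [Jmat]
  by_cases hend : (j : ℕ) + 1 = k i
  · rw [hend, hkill i, map_zero]
    have hmem' : (j' : ℕ) + 1 ∈ p.scanl (· + ·) 0 := by
      rw [hj'val]
      exact (hmem i j j.isLt).mpr hend
    rw [if_neg (by tauto)]
    simp
  · have hjlt : (j : ℕ) + 1 < k i := by have := j.isLt; omega
    have hc2 : (f ^ ((j : ℕ) + 1)) (v i) = b0 ⟨i, ⟨(j : ℕ) + 1, hjlt⟩⟩ := by
      rw [hb0]
    rw [hc2, hbdef, Basis.repr_reindex_apply, Basis.repr_self]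
    have hnotmem : (j' : ℕ) + 1 ∉ p.scanl (· + ·) 0 := by
      rw [hj'val]
      intro hc
      exact hend ((hmem i j j.isLt).mp hc)
    have hEy : ((E ⟨i, ⟨(j : ℕ) + 1, hjlt⟩⟩ : Fin n) : ℕ) = (j' : ℕ) + 1 := by
      rw [hEapp ⟨i, ⟨(j : ℕ) + 1, hjlt⟩⟩]
      simp only
      omega
    have key : (E.symm i' = ⟨i, ⟨(j : ℕ) + 1, hjlt⟩⟩) ↔ ((i' : ℕ) = (j' : ℕ) + 1) := by
      rw [Equiv.symm_apply_eq, Fin.ext_iff, hEy]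
    rw [Finsupp.single_apply]
    by_cases hcase : (i' : ℕ) = (j' : ℕ) + 1
    · rw [if_pos (key.mpr hcase).symm, if_pos ⟨hcase, hnotmem⟩]
    · rw [if_neg (fun hc => hcase (key.mp hc.symm)), if_neg (by tauto)]


/-- Every nilpotent `X ∈ Mat_n(F)` over a number field `F` is `SL_n(F)`-conjugate to a
matrix `D(d)·J_p` for some partition `p` of `n` and some `d ∈ F^×`; conversely every
matrix `D(d)·J_p` is nilpotent (hence represents an `SL_n(F)`-conjugacy class of
nilpotent matrices). -/
theorem nilpotent_conj_DJ (F : Type*) [Field F] [NumberField F] (n : ℕ) (hn : 1 ≤ n) :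
    (∀ X : Matrix (Fin n) (Fin n) F, IsNilpotent X →
      ∃ (p : List ℕ) (d : F) (g : Matrix.SpecialLinearGroup (Fin n) F),
        List.Pairwise (· ≥ ·) p ∧ (∀ k ∈ p, 0 < k) ∧ p.sum = n ∧ d ≠ 0 ∧
          g.val * X * (g⁻¹).val = Dmat F n d * Jmat F n p) ∧
    (∀ (p : List ℕ) (d : F), List.Pairwise (· ≥ ·) p → (∀ k ∈ p, 0 < k) → p.sum = n →
      d ≠ 0 → IsNilpotent (Dmat F n d * Jmat F n p)) := by
  constructor
  · intro X hX
    have hfin : finrank F (Fin n → F) = n := Module.finrank_fin_fun F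
    set f : Module.End F (Fin n → F) := Matrix.toLinAlgEquiv' X with hfdef
    have hf : IsNilpotent f := by
      obtain ⟨N, hN⟩ := hX
      exact ⟨N, by rw [hfdef, ← map_pow, hN, map_zero]⟩
    obtain ⟨p, hsort, hpos, hsum, b, hmat⟩ := exists_basis_jordan n (Fin n → F) f hfin hf
    set e : Basis (Fin n) F (Fin n → F) := Pi.basisFun F (Fin n) with hedef
    have hXe : LinearMap.toMatrix e e f = X := by
      rw [hedef, LinearMap.toMatrix_eq_toMatrix', hfdef]
      show LinearMap.toMatrix' (Matrix.toLin' X) = X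
      exact LinearMap.toMatrix'_toLin' X
    set g0 : Matrix (Fin n) (Fin n) F := b.toMatrix ⇑e with hg0def
    set h0 : Matrix (Fin n) (Fin n) F := e.toMatrix ⇑b with hh0def
    have hconj : g0 * X * h0 = Jmat F n p := by
      rw [← hXe, hg0def, hh0def,
        basis_toMatrix_mul_linearMap_toMatrix_mul_basis_toMatrix b e b e f, hmat]
    have hgh : g0 * h0 = 1 := b.toMatrix_mul_toMatrix_flip e
    set δ : F := g0.det with hδdef
    have hδh : δ * h0.det = 1 := by rw [hδdef, ← Matrix.det_mul, hgh, Matrix.det_one]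
    have hδ : δ ≠ 0 := fun hc => by rw [hc, zero_mul] at hδh; exact zero_ne_one hδh
    have hDdet : ∀ c : F, (Dmat F n c).det = c := by
      intro c
      rw [Dmat, Matrix.det_diagonal]
      rw [Finset.prod_eq_single (⟨n - 1, by omega⟩ : Fin n)]
      · simp
      · intro j _ hj
        rw [if_neg]
        intro hc
        exact hj (Fin.ext (by simpa using hc))
      · simp
    have hDD : Dmat F n δ⁻¹ * Dmat F n δ = 1 := by
      rw [Dmat, Dmat, Matrix.diagonal_mul_diagonal]
      have : (fun i : Fin n =>
          (if (i : ℕ) = n - 1 then δ⁻¹ else 1) * (if (i : ℕ) = n - 1 then δ else 1))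
          = fun _ => (1 : F) := by
        funext i
        by_cases hi : (i : ℕ) = n - 1 <;> simp [hi, inv_mul_cancel₀ hδ]
      rw [this, Matrix.diagonal_one]
    have hJD : Jmat F n p * Dmat F n δ = Jmat F n p := by
      ext i j
      rw [Dmat, Matrix.mul_diagonal]
      by_cases hj : (j : ℕ) = n - 1
      · have hJ0 : Jmat F n p i j = 0 := by
          rw [Jmat, if_neg]
          rintro ⟨h1, -⟩
          have := i.isLt
          omega
        simp [hJ0]
      · rw [if_neg hj, mul_one]
    set gmat := Dmat F n δ⁻¹ * g0 with hgmatdef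
    set ginv := h0 * Dmat F n δ with hginvdef
    have hg1 : gmat * ginv = 1 := by
      have h1 : gmat * ginv = Dmat F n δ⁻¹ * (g0 * h0) * Dmat F n δ := by
        rw [hgmatdef, hginvdef]
        simp only [mul_assoc]
      rw [h1, hgh, mul_one, hDD]
    have hdetg : gmat.det = 1 := by
      rw [hgmatdef, Matrix.det_mul, hDdet, ← hδdef]
      exact inv_mul_cancel₀ hδ
    set g : Matrix.SpecialLinearGroup (Fin n) F := ⟨gmat, hdetg⟩ with hgdef
    have hginv : (g⁻¹).val = ginv := by
      have h1 : gmat * (g⁻¹).val = 1 := by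
        have h2 : ((g * g⁻¹ : Matrix.SpecialLinearGroup (Fin n) F)
            : Matrix (Fin n) (Fin n) F) = 1 := by
          rw [mul_inv_cancel g]
          rfl
        rw [Matrix.SpecialLinearGroup.coe_mul] at h2
        exact h2
      rw [← Matrix.inv_eq_right_inv h1, Matrix.inv_eq_right_inv hg1]
    refine ⟨p, δ⁻¹, g, hsort, hpos, hsum, inv_ne_zero hδ, ?_⟩
    rw [hginv]
    show gmat * X * ginv = _
    have h3 : gmat * X * ginv = Dmat F n δ⁻¹ * (g0 * X * h0) * Dmat F n δ := by
      rw [hgmatdef, hginvdef]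
      simp only [mul_assoc]
    rw [h3, hconj, mul_assoc, hJD]
  · intro p d _ _ _ _
    apply strictLower_nilpotent
    intro i j hij
    have hJ0 : Jmat F n p i j = 0 := by
      rw [Jmat, if_neg (by rintro ⟨h1, -⟩; omega)]
    rw [Dmat, Matrix.diagonal_mul, hJ0, mul_zero]
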